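/- Let $(\psi_n)$ be a nonincreasing sequence of bounded continuous real-valued functions on a compact metric space $E$ converging pointwise to a bounded usc function $\psi^*$. For bounded functions $\phi$ on $E$, let $V[\phi](t,x) = \inf_{\alpha} \sup_{\theta \in [t,T]} \{\tfrac12\int_t^\theta |\alpha_s|^2 ds + \phi(\theta, Y^{t,x,\alpha}_\theta)\}$, where the path map $Y$ is as in the mixed control/stopping problem. Assume $\eta$-optimal controls exist and paths $\theta \mapsto Y^{t,x,\alpha}_\theta$ are continuous. Then $V[\psi^*] = \lim_{n} \downarrow V[\psi_n]$ pointwise. -/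

import Mathlib

open Set Filter
open scoped Topology

/-- Dini-type lemma: for a pointwise nonincreasing sequence of continuous functions
converging pointwise to a limit with bounded-above image on `[t, T]`, the suprema over
`[t, T]` converge (as an infimum) to the supremum of the limit. -/
lemma aux_iInf_sSup (t T : ℝ) (htT : t ≤ T) (h : ℕ → ℝ → ℝ)
    (hc : ∀ n, Continuous (h n))
    (hanti : ∀ θ, Antitone fun n => h n θ)
    (hf : ℝ → ℝ)
    (hlim : ∀ θ, Tendsto (fun n => h n θ) atTop (𝓝 (hf θ)))
    (hbdd : BddAbove (hf '' Icc t T)) :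
    ⨅ n, sSup (h n '' Icc t T) = sSup (hf '' Icc t T) := by
  have hI : IsCompact (Icc t T) := isCompact_Icc
  have hne : (Icc t T).Nonempty := nonempty_Icc.2 htT
  have hle : ∀ n θ, hf θ ≤ h n θ := fun n θ =>
    le_of_tendsto (hlim θ) (eventually_atTop.2 ⟨n, fun k hk => hanti θ hk⟩)
  have hbddn : ∀ n, BddAbove (h n '' Icc t T) := fun n =>
    hI.bddAbove_image (hc n).continuousOn
  choose θm hθmI hθm using fun n => hI.exists_isMaxOn hne (hc n).continuousOn
  have hFn : ∀ n, sSup (h n '' Icc t T) = h n (θm n) := fun n =>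
    IsGreatest.csSup_eq ⟨mem_image_of_mem _ (hθmI n), by
      rintro y ⟨θ, hθ, rfl⟩; exact hθm n hθ⟩
  have hlb : ∀ n, sSup (hf '' Icc t T) ≤ sSup (h n '' Icc t T) := fun n =>
    csSup_le (hne.image _) (by
      rintro y ⟨θ, hθ, rfl⟩
      exact (hle n θ).trans (le_csSup (hbddn n) (mem_image_of_mem _ hθ)))
  have hbb : BddBelow (range fun n => sSup (h n '' Icc t T)) :=
    ⟨sSup (hf '' Icc t T), by rintro y ⟨n, rfl⟩; exact hlb n⟩
  refine le_antisymm ?_ (le_ciInf hlb)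
  obtain ⟨θb, hθbI, φ, hφ, hφt⟩ := hI.tendsto_subseq hθmI
  have h1 : ∀ m, (⨅ n, sSup (h n '' Icc t T)) ≤ h m θb := by
    intro m
    have htd : Tendsto (fun k => h m (θm (φ k))) atTop (𝓝 (h m θb)) :=
      ((hc m).tendsto θb).comp hφt
    refine ge_of_tendsto htd ?_
    filter_upwards [eventually_ge_atTop m] with k hk
    calc (⨅ n, sSup (h n '' Icc t T)) ≤ sSup (h (φ k) '' Icc t T) := ciInf_le hbb (φ k)
      _ = h (φ k) (θm (φ k)) := hFn (φ k)
      _ ≤ h m (θm (φ k)) := hanti _ (hk.trans (hφ.le_apply))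
  have h2 : (⨅ n, sSup (h n '' Icc t T)) ≤ hf θb :=
    ge_of_tendsto (hlim θb) (Eventually.of_forall h1)
  exact h2.trans (le_csSup hbdd (mem_image_of_mem _ hθbI))

/-- The inf-sup value of the mixed control/stopping problem at a fixed starting point,
with obstacle `φ`: `V[φ] = inf_α sup_{θ∈[t,T]} { C(α,θ) + φ(θ, Y^α_θ) }`, where
`C(α,θ)` stands for `½∫_t^θ |α_s|² ds`. -/
noncomputable def Vval {S : Type*} {Ctrl : Type*} (t T : ℝ) (A : Set Ctrl)
    (C : Ctrl → ℝ → ℝ) (Y : Ctrl → ℝ → S) (φ : ℝ × S → ℝ) : ℝ :=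
  sInf ((fun α => sSup ((fun θ => C α θ + φ (θ, Y α θ)) '' Icc t T)) '' A)

/-- Lemma C.3: if a nonincreasing sequence of bounded continuous obstacles `ψ n`
converges pointwise to a bounded usc obstacle `ψ*` on the compact state space, then the
value functions converge monotonically: `V[ψ*] = lim ↓ V[ψ n]`. -/
theorem stmt10 {S : Type*} [MetricSpace S] [CompactSpace S] {Ctrl : Type*}
    (t T : ℝ) (htT : t ≤ T)
    (A : Set Ctrl) (hA : A.Nonempty)
    (C : Ctrl → ℝ → ℝ) (hC0 : ∀ α θ, 0 ≤ C α θ) (hCc : ∀ α ∈ A, Continuous (C α))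
    (Y : Ctrl → ℝ → S) (hY : ∀ α ∈ A, Continuous (Y α))
    (ψ : ℕ → ℝ × S → ℝ)
    (hψc : ∀ n, Continuous (ψ n))
    (hψb : ∀ n, ∃ M, ∀ p, |ψ n p| ≤ M)
    (hmono : ∀ n p, ψ (n + 1) p ≤ ψ n p)
    (ψs : ℝ × S → ℝ)
    (hψs : UpperSemicontinuous ψs)
    (hψsb : ∃ M, ∀ p, |ψs p| ≤ M)
    (hlim : ∀ p, Tendsto (fun n => ψ n p) atTop (𝓝 (ψs p))) :
    Tendsto (fun n => Vval t T A C Y (ψ n)) atTop (𝓝 (Vval t T A C Y ψs)) ∧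
      Antitone fun n => Vval t T A C Y (ψ n) := by
  obtain ⟨M, hM⟩ := hψsb
  have hI : IsCompact (Icc t T) := isCompact_Icc
  have hne : (Icc t T).Nonempty := nonempty_Icc.2 htT
  -- continuity of the running payoff
  have hgc : ∀ α ∈ A, ∀ n, Continuous fun θ => C α θ + ψ n (θ, Y α θ) := fun α hα n =>
    (hCc α hα).add ((hψc n).comp (continuous_id.prodMk (hY α hα)))
  -- pointwise bound ψs ≤ ψ n
  have hψanti : ∀ p, Antitone fun k => ψ k p := fun p =>
    antitone_nat_of_succ_le fun k => hmono k p
  have hψge : ∀ n p, ψs p ≤ ψ n p := fun n p =>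
    le_of_tendsto (hlim p) (eventually_atTop.2 ⟨n, fun k hk => hψanti p hk⟩)
  -- boundedness of the images
  have hbddn : ∀ α ∈ A, ∀ n,
      BddAbove ((fun θ => C α θ + ψ n (θ, Y α θ)) '' Icc t T) := fun α hα n =>
    hI.bddAbove_image (hgc α hα n).continuousOn
  have hbddf : ∀ α ∈ A,
      BddAbove ((fun θ => C α θ + ψs (θ, Y α θ)) '' Icc t T) := by
    intro α hα
    obtain ⟨K, hK⟩ := hI.bddAbove_image (hCc α hα).continuousOn
    refine ⟨K + M, ?_⟩
    rintro y ⟨θ, hθ, rfl⟩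
    exact add_le_add (hK (mem_image_of_mem _ hθ)) ((abs_le.1 (hM _)).2)
  -- key identity for each control
  have key : ∀ α ∈ A,
      (⨅ n, sSup ((fun θ => C α θ + ψ n (θ, Y α θ)) '' Icc t T))
        = sSup ((fun θ => C α θ + ψs (θ, Y α θ)) '' Icc t T) := fun α hα =>
    aux_iInf_sSup t T htT _ (hgc α hα)
      (fun θ => antitone_nat_of_succ_le fun n => add_le_add_right (hmono n _) _)
      _ (fun θ => (hlim _).const_add (C α θ)) (hbddf α hα)
  -- comparison of the suprema
  have hge : ∀ n, ∀ α ∈ A,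
      sSup ((fun θ => C α θ + ψs (θ, Y α θ)) '' Icc t T)
        ≤ sSup ((fun θ => C α θ + ψ n (θ, Y α θ)) '' Icc t T) := by
    intro n α hα
    refine csSup_le (hne.image _) ?_
    rintro y ⟨θ, hθ, rfl⟩
    exact (add_le_add_right (hψge n _) _).trans
      (le_csSup (hbddn α hα n) (mem_image_of_mem _ hθ))
  have hFnmono : ∀ n, ∀ α ∈ A,
      sSup ((fun θ => C α θ + ψ (n + 1) (θ, Y α θ)) '' Icc t T)
        ≤ sSup ((fun θ => C α θ + ψ n (θ, Y α θ)) '' Icc t T) := by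
    intro n α hα
    refine csSup_le (hne.image _) ?_
    rintro y ⟨θ, hθ, rfl⟩
    exact (add_le_add_right (hmono n _) _).trans
      (le_csSup (hbddn α hα n) (mem_image_of_mem _ hθ))
  -- lower bound on the suprema
  have hFlb : ∀ α ∈ A, -M ≤ sSup ((fun θ => C α θ + ψs (θ, Y α θ)) '' Icc t T) := by
    intro α hα
    have h1 : -M ≤ C α t + ψs (t, Y α t) := by
      have := (abs_le.1 (hM (t, Y α t))).1
      have := hC0 α t
      linarith
    exact h1.trans (le_csSup (hbddf α hα) (mem_image_of_mem _ ⟨le_refl t, htT⟩))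
  -- bddBelow of the images over A
  have hbbF : BddBelow ((fun α => sSup ((fun θ => C α θ + ψs (θ, Y α θ)) '' Icc t T)) '' A) :=
    ⟨-M, by rintro y ⟨α, hα, rfl⟩; exact hFlb α hα⟩
  have hbbn : ∀ n,
      BddBelow ((fun α => sSup ((fun θ => C α θ + ψ n (θ, Y α θ)) '' Icc t T)) '' A) := fun n =>
    ⟨-M, by rintro y ⟨α, hα, rfl⟩; exact (hFlb α hα).trans (hge n α hα)⟩
  simp only [Vval]
  have hVge : ∀ n,
      sInf ((fun α => sSup ((fun θ => C α θ + ψs (θ, Y α θ)) '' Icc t T)) '' A)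
        ≤ sInf ((fun α => sSup ((fun θ => C α θ + ψ n (θ, Y α θ)) '' Icc t T)) '' A) := by
    intro n
    refine le_csInf (hA.image _) ?_
    rintro y ⟨α, hα, rfl⟩
    exact (csInf_le hbbF (mem_image_of_mem _ hα)).trans (hge n α hα)
  have hVanti : Antitone fun n =>
      sInf ((fun α => sSup ((fun θ => C α θ + ψ n (θ, Y α θ)) '' Icc t T)) '' A) := by
    refine antitone_nat_of_succ_le fun n => ?_
    refine le_csInf (hA.image _) ?_
    rintro y ⟨α, hα, rfl⟩
    exact (csInf_le (hbbn (n + 1)) (mem_image_of_mem _ hα)).trans (hFnmono n α hα)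
  refine ⟨?_, hVanti⟩
  have hbbr : BddBelow (range fun n =>
      sInf ((fun α => sSup ((fun θ => C α θ + ψ n (θ, Y α θ)) '' Icc t T)) '' A)) :=
    ⟨_, by rintro y ⟨n, rfl⟩; exact hVge n⟩
  have ht := tendsto_atTop_ciInf hVanti hbbr
  have heq : (⨅ n, sInf ((fun α => sSup ((fun θ => C α θ + ψ n (θ, Y α θ)) '' Icc t T)) '' A))
      = sInf ((fun α => sSup ((fun θ => C α θ + ψs (θ, Y α θ)) '' Icc t T)) '' A) := by
    refine le_antisymm ?_ (le_ciInf hVge)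
    refine le_csInf (hA.image _) ?_
    rintro y ⟨α, hα, rfl⟩
    calc (⨅ n, sInf ((fun α => sSup ((fun θ => C α θ + ψ n (θ, Y α θ)) '' Icc t T)) '' A))
        ≤ ⨅ n, sSup ((fun θ => C α θ + ψ n (θ, Y α θ)) '' Icc t T) :=
          ciInf_mono hbbr fun n => csInf_le (hbbn n) (mem_image_of_mem _ hα)
      _ = _ := key α hα
  rwa [heq] at ht
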